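/- Let E be a real inner product space, let C ⊆ E be a cone, and let y ∈ E. If ŷ₁ ∈ C and ŷ₂ ∈ C both satisfy ‖y − ŷᵢ‖ ≤ ‖y − x‖ for all x ∈ C (i = 1, 2), then ‖ŷ₁‖ = ‖ŷ₂‖; i.e., all metric projections of y onto a cone have the same norm. -/

import Mathlib

open InnerProductSpace

lemma cone_proj_inner_eq {E : Type*} [NormedAddCommGroup E] [InnerProductSpace ℝ E]
    (C : Set E) (hC : ∀ x ∈ C, ∀ t : ℝ, 0 ≤ t → t • x ∈ C)
    (y v : E) (hv : v ∈ C) (hmin : ∀ x ∈ C, ‖y - v‖ ≤ ‖y - x‖) :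
    inner ℝ y v = (‖v‖ : ℝ) ^ 2 := by
  have key : ∀ t : ℝ, 0 ≤ t →
      ‖y‖^2 - 2 * inner ℝ y v + ‖v‖^2 ≤ ‖y‖^2 - 2 * (t * inner ℝ y v) + t^2 * ‖v‖^2 := by
    intro t ht
    have h1 := hmin (t • v) (hC v hv t ht)
    have h2 : ‖y - v‖^2 ≤ ‖y - t • v‖^2 := by
      apply pow_le_pow_left₀ (norm_nonneg _) h1 2
    rw [norm_sub_sq_real, norm_sub_sq_real] at h2
    rw [real_inner_smul_right, norm_smul] at h2
    calc ‖y‖^2 - 2 * inner ℝ y v + ‖v‖^2 ≤ ‖y‖ ^ 2 - 2 * (t * inner ℝ y v) + ‖t • v‖ ^ 2 := by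
          rw [norm_smul]; convert h2 using 2 <;> ring_nf
      _ = ‖y‖^2 - 2 * (t * inner ℝ y v) + t^2 * ‖v‖^2 := by
          rw [norm_smul, mul_pow, Real.norm_eq_abs, sq_abs]
  by_cases h0 : v = 0
  · simp [h0]
  · have hn : (0:ℝ) < ‖v‖^2 := pow_pos (norm_pos_iff.mpr h0) 2
    have hc0 := key 0 le_rfl
    have hpos : (0:ℝ) < inner ℝ y v := by nlinarith
    have hc := key ((inner ℝ y v : ℝ) / ‖v‖^2) (div_nonneg hpos.le hn.le)
    have hne := hn.ne'
    set c := (inner ℝ y v : ℝ) with hcdef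
    set n := ‖v‖^2 with hndef
    have e1 : c/n * c = c^2/n := by ring
    have e2 : (c/n)^2 * n = c^2/n := by field_simp
    rw [e1, e2] at hc
    have e3 : c^2/n * n = c^2 := div_mul_cancel₀ _ hne
    have hc2 := mul_le_mul_of_nonneg_right hc hn.le
    nlinarith [sq_nonneg (c - n)]

theorem metric_projections_onto_cone_same_norm
    {E : Type*} [NormedAddCommGroup E] [InnerProductSpace ℝ E]
    (C : Set E) (hC : ∀ x ∈ C, ∀ t : ℝ, 0 ≤ t → t • x ∈ C)
    (y : E) (yhat1 yhat2 : E) (hyhat1C : yhat1 ∈ C) (hyhat2C : yhat2 ∈ C)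
    (hmin₁ : ∀ x ∈ C, ‖y - yhat1‖ ≤ ‖y - x‖)
    (hmin₂ : ∀ x ∈ C, ‖y - yhat2‖ ≤ ‖y - x‖) :
    ‖yhat1‖ = ‖yhat2‖ := by
  have h1 := cone_proj_inner_eq C hC y yhat1 hyhat1C hmin₁
  have h2 := cone_proj_inner_eq C hC y yhat2 hyhat2C hmin₂
  have heq : ‖y - yhat1‖ = ‖y - yhat2‖ :=
    le_antisymm (hmin₁ _ hyhat2C) (hmin₂ _ hyhat1C)
  have hsq : ‖y - yhat1‖^2 = ‖y - yhat2‖^2 := by rw [heq]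
  rw [norm_sub_sq_real, norm_sub_sq_real, h1, h2] at hsq
  have : ‖yhat1‖^2 = ‖yhat2‖^2 := by nlinarith
  exact le_antisymm (by nlinarith [norm_nonneg yhat1, norm_nonneg yhat2]) (by nlinarith [norm_nonneg yhat1, norm_nonneg yhat2])
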